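/- With f_{n-1} x^{(β)} = [β_n+1] x^{(β−ε_{n-1}+ε_n)} and f_n x^{(β)} = −x^{(β−ε_n)}, the operators satisfy the quantum Serre relation f_{n-1}² f_n − (q+q^{-1}) f_{n-1} f_n f_{n-1} + f_n f_{n-1}² = 0. -/

import Mathlib

open Finset

/-- The quantum integer `[m] := (q^m - q^{-m})/(q - q^{-1})` for `m : ℤ`. -/
def qint {K : Type*} [Field K] (q : K) (m : ℤ) : K :=
  (q ^ m - q ^ (-m)) / (q - q⁻¹)

/-- `θ(ε_k, β) = q^{Σ_{s>k} β_s - Σ_{s<k} β_s}`. -/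
def thq {K : Type*} [Field K] (q : K) (n : ℕ) (β : ℕ → ℤ) (k : ℕ) : K :=
  q ^ ((∑ s ∈ Finset.Icc (k + 1) n, β s) - ∑ s ∈ Finset.Ico 1 k, β s)

/-- The `i`-th standard basis vector `ε_i`. -/
def eps (i : ℕ) : ℕ → ℤ := fun k => if k = i then 1 else 0

theorem serre_f {K V : Type*} [Field K] [AddCommGroup V] [Module K V]
    (q : K) (hq0 : q ≠ 0) (hq1 : q ≠ 1) (hqm : q ≠ -1) (n : ℕ) (hn : 2 ≤ n)
    (X : (ℕ → ℤ) → V)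
    (hX0 : ∀ β : ℕ → ℤ, (∃ k ∈ Finset.Icc 1 n, β k < 0) → X β = 0)
    (f1 fn : Module.End K V)
    (hf1 : ∀ β : ℕ → ℤ, (∀ k ∈ Finset.Icc 1 n, 0 ≤ β k) →
      f1 (X β) = qint q (β n + 1) • X (β - eps (n - 1) + eps n))
    (hfn : ∀ β : ℕ → ℤ, (∀ k ∈ Finset.Icc 1 n, 0 ≤ β k) →
      fn (X β) = - X (β - eps n)) :
    ∀ β : ℕ → ℤ, (∀ k ∈ Finset.Icc 1 n, 0 ≤ β k) →
      (f1 * f1 * fn - (q + q⁻¹) • (f1 * fn * f1) + fn * f1 * f1) (X β) = 0 := by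
  intro β hβ
  set m := n - 1 with hm
  have hnm : ¬ n = m := by omega
  have hmem_m : m ∈ Finset.Icc 1 n := by simp [Finset.mem_Icc]; omega
  have hmem_n : n ∈ Finset.Icc 1 n := by simp [Finset.mem_Icc]; omega
  -- the recurrence for quantum integers
  have hrec : ∀ c : ℤ, qint q c + qint q (c+2) = (q + q⁻¹) * qint q (c+1) := by
    intro c
    simp only [qint, ← add_div, ← mul_div_assoc]
    congr 1
    have h1 : q ^ (c+1) = q^c * q := zpow_add_one₀ hq0 c
    have h2 : q ^ (c+2) = q^c * q * q := by
      rw [show c+2 = c+1+1 by ring, zpow_add_one₀ hq0, zpow_add_one₀ hq0]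
    have h3 : q ^ (-(c+1)) = q^(-c) * q⁻¹ := by
      rw [neg_add, zpow_add₀ hq0, zpow_neg_one]
    have h4 : q ^ (-(c+2)) = q^(-c) * q⁻¹ * q⁻¹ := by
      rw [show -(c+2) = -(c+1) + -1 by ring, zpow_add₀ hq0, h3, zpow_neg_one]
    rw [h1, h2, h3, h4]
    have hqinv : q * q⁻¹ = 1 := mul_inv_cancel₀ hq0
    linear_combination (q ^ (-c) - q ^ c) * hqinv
  -- the formulas for f1 and fn hold unconditionally
  have hfn' : ∀ γ : ℕ → ℤ, fn (X γ) = - X (γ - eps n) := by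
    intro γ
    by_cases hpos : ∀ k ∈ Finset.Icc 1 n, 0 ≤ γ k
    · exact hfn γ hpos
    · push_neg at hpos
      obtain ⟨k, hk, hkneg⟩ := hpos
      rw [hX0 γ ⟨k, hk, by omega⟩, hX0 (γ - eps n) ⟨k, hk, ?_⟩, map_zero, neg_zero]
      simp only [Pi.sub_apply, eps]
      split <;> omega
  have hf1' : ∀ γ : ℕ → ℤ,
      f1 (X γ) = qint q (γ n + 1) • X (γ - eps m + eps n) := by
    intro γ
    by_cases hpos : ∀ k ∈ Finset.Icc 1 n, 0 ≤ γ k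
    · exact hf1 γ hpos
    · push_neg at hpos
      obtain ⟨k, hk, hkneg⟩ := hpos
      rw [hX0 γ ⟨k, hk, by omega⟩, map_zero]
      by_cases hkn : k = n
      · rw [hkn] at hkneg
        by_cases hb1 : γ n = -1
        · rw [hb1]
          norm_num [qint]
        · rw [hX0 (γ - eps m + eps n) ⟨n, hmem_n, ?_⟩, smul_zero]
          simp only [Pi.add_apply, Pi.sub_apply, eps, if_pos rfl, if_neg hnm]
          omega
      · rw [hX0 (γ - eps m + eps n) ⟨k, hk, ?_⟩, smul_zero]
        simp only [Pi.add_apply, Pi.sub_apply, eps, if_neg hkn]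
        split <;> omega
  -- now compute
  simp only [LinearMap.add_apply, LinearMap.sub_apply, LinearMap.smul_apply,
    Module.End.mul_apply, hfn', hf1', map_neg, map_smul, smul_neg, neg_neg, smul_smul]
  have e1 : β - eps n - eps m + eps n - eps m + eps n = β - eps m - eps m + eps n := by abel
  have e2 : β - eps m + eps n - eps n - eps m + eps n = β - eps m - eps m + eps n := by abel
  have e3 : β - eps m + eps n - eps m + eps n - eps n = β - eps m - eps m + eps n := by abel
  have v1 : (β - eps n) n = β n - 1 := by simp [eps, hnm]
  have v2 : (β - eps n - eps m + eps n) n = β n := by simp [eps, hnm]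
  have v3 : (β - eps m + eps n - eps n) n = β n := by simp [eps, hnm]
  have v4 : (β - eps m + eps n) n = β n + 1 := by simp [eps, hnm]
  rw [e1, e2, e3, v1, v2, v3, v4,
    show β n - 1 + 1 = β n from by ring, show β n + 1 + 1 = β n + 2 from by ring]
  have hr := hrec (β n)
  match_scalars
  linear_combination (-qint q (β n + 1)) * hr
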